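/- Let k be a number field and let f be a nonnegative-valued multiplicative function on the nonzero ideals of 𝓞_k. Suppose there are constants A ≥ 0 and B ≥ 0 such that: (i) for all y ≥ 0, Σ_{𝔭 : |𝔭| ≤ y} f(𝔭)·log|𝔭| ≤ A·y; and (ii) every finite partial sum of the double series Σ_𝔭 Σ_{ν ≥ 2} f(𝔭^ν)·log(|𝔭|^ν)/|𝔭|^ν is at most B. Then for all real x > 1, Σ_{𝔞 : |𝔞| ≤ x} f(𝔞) ≤ (A + B + 1)·(x/log x)·∏_{𝔭 : |𝔭| ≤ x} (Σ_{ν = 0}^{∞} f(𝔭^ν)/|𝔭|^ν), where the sum on the left runs over nonzero ideals of norm at most x, the product runs over the finitely many nonzero prime ideals of norm at most x, and each Euler factor Σ_{ν ≥ 0} f(𝔭^ν)/|𝔭|^ν is interpreted as a sum in the extended nonnegative reals [0,∞] (so the inequality is an inequality of extended nonnegative reals, trivially true if some factor diverges). -/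

import Mathlib

open NumberField

section Aux
variable {k : Type*} [Field k] [NumberField k]

lemma aux_norm_pos {I : Ideal (𝓞 k)} (hI : I ≠ ⊥) : 0 < (Ideal.absNorm I : ℝ) := by
  have : Ideal.absNorm I ≠ 0 := by
    simpa [Ideal.absNorm_eq_zero_iff] using hI
  positivity

lemma aux_norm_prime_two {P : Ideal (𝓞 k)} (hP : P ≠ ⊥) (hPp : P.IsPrime) :
    2 ≤ (Ideal.absNorm P : ℝ) := by
  have h0 : Ideal.absNorm P ≠ 0 := by simpa [Ideal.absNorm_eq_zero_iff] using hP
  have h1 : Ideal.absNorm P ≠ 1 := by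
    simpa [Ideal.absNorm_eq_one_iff] using hPp.ne_top
  have : 2 ≤ Ideal.absNorm P := by omega
  exact_mod_cast this

lemma aux_pow_ne_bot {P : Ideal (𝓞 k)} (hP : P ≠ ⊥) (ν : ℕ) : P ^ ν ≠ ⊥ := by
  rw [← Ideal.zero_eq_bot] at *
  exact pow_ne_zero _ hP

lemma aux_coprime {P Q : Ideal (𝓞 k)} (hP : P ≠ ⊥) (hPp : P.IsPrime)
    (hQ : Q ≠ ⊥) (hQp : Q.IsPrime) (hne : P ≠ Q) : IsCoprime P Q :=
  Ideal.isCoprime_iff_sup_eq.mpr ((hPp.isMaximal hP).coprime_of_ne (hQp.isMaximal hQ) hne)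

/-- multiplicativity over a finset of distinct primes raised to powers -/
lemma aux_f_prod (f : Ideal (𝓞 k) → ℝ) (hf_one : f ⊤ = 1)
    (hf_mul : ∀ I J : Ideal (𝓞 k), I ≠ ⊥ → J ≠ ⊥ → I ⊔ J = ⊤ → f (I * J) = f I * f J)
    (s : Finset (Ideal (𝓞 k))) (hs : ∀ P ∈ s, P ≠ ⊥ ∧ P.IsPrime) (e : Ideal (𝓞 k) → ℕ) :
    f (∏ P ∈ s, P ^ e P) = ∏ P ∈ s, f (P ^ e P) := by
  classical
  induction s using Finset.induction_on with
  | empty => simpa [Ideal.one_eq_top] using hf_one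
  | @insert P s hPs ih =>
    have hP := hs P (Finset.mem_insert_self _ _)
    have hs' : ∀ Q ∈ s, Q ≠ ⊥ ∧ Q.IsPrime := fun Q hQ => hs Q (Finset.mem_insert_of_mem hQ)
    have hcop : IsCoprime (P ^ e P) (∏ Q ∈ s, Q ^ e Q) := by
      apply IsCoprime.pow_left
      apply IsCoprime.prod_right
      intro Q hQ
      exact IsCoprime.pow_right (aux_coprime hP.1 hP.2 (hs' Q hQ).1 (hs' Q hQ).2
        (fun h => hPs (h ▸ hQ)))
    have hne1 : P ^ e P ≠ ⊥ := aux_pow_ne_bot hP.1 _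
    have hne2 : (∏ Q ∈ s, Q ^ e Q) ≠ ⊥ := by
      rw [← Ideal.zero_eq_bot]
      rw [Finset.prod_ne_zero_iff]
      intro Q hQ
      rw [Ideal.zero_eq_bot]
      exact aux_pow_ne_bot (hs' Q hQ).1 _
    rw [Finset.prod_insert hPs, Finset.prod_insert hPs,
      hf_mul _ _ hne1 hne2 (Ideal.isCoprime_iff_sup_eq.mp hcop), ih hs']

end Aux

open UniqueFactorizationMonoid

section Aux2
set_option linter.unusedSectionVars false
variable {k : Type*} [Field k] [NumberField k]

lemma aux_ne_zero {I : Ideal (𝓞 k)} (hI : I ≠ ⊥) : I ≠ 0 := by rwa [Ideal.zero_eq_bot]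

lemma aux_eq_prod (I : Ideal (𝓞 k)) (hI : I ≠ ⊥) {s : Finset (Ideal (𝓞 k))}
    [DecidableEq (Ideal (𝓞 k))]
    (hsub : (normalizedFactors I).toFinset ⊆ s) :
    I = ∏ P ∈ s, P ^ (normalizedFactors I).count P := by
  classical
  have h1 : (normalizedFactors I).prod = I :=
    associated_iff_eq.mp (prod_normalizedFactors (aux_ne_zero hI))
  conv_lhs => rw [← h1, Finset.prod_multiset_count]
  refine Finset.prod_subset hsub (fun P _ hnP => ?_)
  rw [Multiset.count_eq_zero.2 (fun h => hnP (Multiset.mem_toFinset.mpr h)), pow_zero]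

lemma aux_mem_nf {I P : Ideal (𝓞 k)} (hI : I ≠ ⊥) :
    P ∈ normalizedFactors I ↔ Prime P ∧ P ∣ I :=
  mem_normalizedFactors_iff (aux_ne_zero hI)

lemma aux_pow_count_dvd (I P : Ideal (𝓞 k)) [DecidableEq (Ideal (𝓞 k))] :
    P ^ (normalizedFactors I).count P ∣ I := by
  classical
  by_cases hI : I = 0
  · rw [hI]; exact dvd_zero _
  have h1 : Multiset.replicate ((normalizedFactors I).count P) P ≤ normalizedFactors I :=
    Multiset.le_count_iff_replicate_le.mp le_rfl
  have h2 := Multiset.prod_dvd_prod_of_le h1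
  rw [Multiset.prod_replicate] at h2
  exact h2.trans (prod_normalizedFactors hI).dvd

lemma aux_dvd_norm_le {I J : Ideal (𝓞 k)} (h : J ∣ I) (hI : I ≠ ⊥) :
    (Ideal.absNorm J : ℝ) ≤ (Ideal.absNorm I : ℝ) := by
  have h2 : Ideal.absNorm J ∣ Ideal.absNorm I :=
    Ideal.absNorm_dvd_absNorm_of_le (Ideal.le_of_dvd h)
  have h3 : 0 < Ideal.absNorm I := Nat.pos_of_ne_zero (by simpa [Ideal.absNorm_eq_zero_iff])
  exact_mod_cast Nat.le_of_dvd h3 h2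

lemma aux_norm_mul_r (I J : Ideal (𝓞 k)) :
    (Ideal.absNorm (I * J) : ℝ) = (Ideal.absNorm I : ℝ) * (Ideal.absNorm J : ℝ) := by
  rw [map_mul (Ideal.absNorm : Ideal (𝓞 k) →*₀ ℕ), Nat.cast_mul]

lemma aux_norm_pow_r (P : Ideal (𝓞 k)) (m : ℕ) :
    (Ideal.absNorm (P ^ m) : ℝ) = (Ideal.absNorm P : ℝ) ^ m := by
  rw [map_pow (Ideal.absNorm : Ideal (𝓞 k) →*₀ ℕ), Nat.cast_pow]

lemma aux_count_mul_pow {J P : Ideal (𝓞 k)} [DecidableEq (Ideal (𝓞 k))]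
    (hJ : J ≠ ⊥) (hP : P ≠ ⊥) (hPp : P.IsPrime) (hnd : ¬ P ∣ J) (ν : ℕ) :
    (normalizedFactors (J * P ^ ν)).count P = ν := by
  classical
  have hPprime : Prime P := Ideal.prime_of_isPrime hP hPp
  have h1 : normalizedFactors (J * P ^ ν) = normalizedFactors J + normalizedFactors (P ^ ν) :=
    normalizedFactors_mul (aux_ne_zero hJ) (aux_ne_zero (aux_pow_ne_bot hP ν))
  have h2 : normalizedFactors (P ^ ν) = Multiset.replicate ν P := by
    rw [normalizedFactors_pow, normalizedFactors_irreducible hPprime.irreducible,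
      normalize_eq, Multiset.nsmul_singleton]
  have h3 : (normalizedFactors J).count P = 0 := by
    rw [Multiset.count_eq_zero]
    intro hmem
    exact hnd ((aux_mem_nf hJ).mp hmem).2
  rw [h1, Multiset.count_add, h3, h2, Multiset.count_replicate_self, zero_add]

lemma aux_log_norm (I : Ideal (𝓞 k)) (hI : I ≠ ⊥) [DecidableEq (Ideal (𝓞 k))] :
    Real.log (Ideal.absNorm I) =
      ∑ P ∈ (normalizedFactors I).toFinset,
        ((normalizedFactors I).count P : ℝ) * Real.log (Ideal.absNorm P) := by
  classical
  conv_lhs => rw [aux_eq_prod I hI (le_refl (normalizedFactors I).toFinset)]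
  rw [map_prod (Ideal.absNorm : Ideal (𝓞 k) →*₀ ℕ)]
  simp_rw [map_pow]
  push_cast
  rw [Real.log_prod]
  · exact Finset.sum_congr rfl fun P hP => Real.log_pow _ _
  · intro P hP
    have hPmem := (aux_mem_nf hI).mp (Multiset.mem_toFinset.mp hP)
    have := aux_norm_pos (k := k) (I := P) hPmem.1.ne_zero
    positivity

end Aux2

section Aux3
set_option linter.unusedSectionVars false
variable {k : Type*} [Field k] [NumberField k]

lemma aux_euler (f : Ideal (𝓞 k) → ℝ)
    (hf_nonneg : ∀ I : Ideal (𝓞 k), I ≠ ⊥ → 0 ≤ f I)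
    (hf_one : f ⊤ = 1)
    (hf_mul : ∀ I J : Ideal (𝓞 k), I ≠ ⊥ → J ≠ ⊥ → I ⊔ J = ⊤ → f (I * J) = f I * f J)
    (x : ℝ) (hx : 1 < x)
    (T Pf : Finset (Ideal (𝓞 k)))
    (hT : ∀ I, I ∈ T ↔ I ≠ ⊥ ∧ (Ideal.absNorm I : ℝ) ≤ x)
    (hPf : ∀ Q, Q ∈ Pf ↔ Q ≠ ⊥ ∧ Q.IsPrime ∧ (Ideal.absNorm Q : ℝ) ≤ x) :
    ENNReal.ofReal (∑ I ∈ T, f I / (Ideal.absNorm I : ℝ)) ≤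
      ∏ P ∈ Pf, ∑' ν : ℕ, ENNReal.ofReal (f (P ^ ν) / (Ideal.absNorm P : ℝ) ^ ν) := by
  classical
  set n := ⌊x⌋₊ with hn
  set c : Ideal (𝓞 k) → Ideal (𝓞 k) → ℕ :=
    fun I P => (normalizedFactors I).count P with hc
  -- prime factors of I ∈ T lie in Pf
  have key1 : ∀ I ∈ T, (normalizedFactors I).toFinset ⊆ Pf := by
    intro I hI P hP
    obtain ⟨hIb, hIx⟩ := (hT I).mp hI
    obtain ⟨hPpr, hPdvd⟩ := (aux_mem_nf hIb).mp (Multiset.mem_toFinset.mp hP)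
    refine (hPf P).mpr ⟨by rw [← Ideal.zero_eq_bot]; exact hPpr.ne_zero,
      Ideal.isPrime_of_prime hPpr, le_trans (aux_dvd_norm_le hPdvd hIb) hIx⟩
  have key2 : ∀ I ∈ T, I = ∏ P ∈ Pf, P ^ c I P := by
    intro I hI
    exact aux_eq_prod I ((hT I).mp hI).1 (key1 I hI)
  have key3 : ∀ I ∈ T, ∀ P ∈ Pf, c I P ≤ n := by
    intro I hI P hP
    obtain ⟨hIb, hIx⟩ := (hT I).mp hI
    obtain ⟨hPb, hPp, _⟩ := (hPf P).mp hP
    have h1 : ((Ideal.absNorm P : ℝ)) ^ c I P ≤ (Ideal.absNorm I : ℝ) := by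
      have := aux_dvd_norm_le (aux_pow_count_dvd I P) hIb
      rwa [map_pow, Nat.cast_pow] at this
    have h2 : (2 : ℝ) ^ c I P ≤ (Ideal.absNorm P : ℝ) ^ c I P :=
      pow_le_pow_left₀ (by norm_num) (aux_norm_prime_two hPb hPp) _
    have h3 : (c I P : ℝ) < (2 : ℝ) ^ c I P := by
      exact_mod_cast Nat.lt_two_pow_self (n := c I P)
    exact Nat.le_floor (le_of_lt (lt_of_lt_of_le h3 (h2.trans (h1.trans hIx))))
  -- nonnegativity of terms
  have hterm_nonneg : ∀ I ∈ T, 0 ≤ f I / (Ideal.absNorm I : ℝ) := by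
    intro I hI
    obtain ⟨hIb, _⟩ := (hT I).mp hI
    exact div_nonneg (hf_nonneg I hIb) (le_of_lt (aux_norm_pos hIb))
  rw [ENNReal.ofReal_sum_of_nonneg hterm_nonneg]
  -- rewrite each term as a product over Pf
  set g : Ideal (𝓞 k) → ℕ → ENNReal :=
    fun P m => ENNReal.ofReal (f (P ^ m) / (Ideal.absNorm P : ℝ) ^ m) with hg
  have hprime_of_Pf : ∀ P ∈ Pf, P ≠ ⊥ ∧ P.IsPrime := fun P hP =>
    ⟨((hPf P).mp hP).1, ((hPf P).mp hP).2.1⟩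
  have step1 : ∀ I ∈ T, ENNReal.ofReal (f I / (Ideal.absNorm I : ℝ)) =
      ∏ P ∈ Pf, g P (c I P) := by
    intro I hI
    have hfI : f I = ∏ P ∈ Pf, f (P ^ c I P) := by
      conv_lhs => rw [key2 I hI]
      exact aux_f_prod f hf_one hf_mul Pf hprime_of_Pf _
    have hNI : (Ideal.absNorm I : ℝ) = ∏ P ∈ Pf, (Ideal.absNorm P : ℝ) ^ c I P := by
      conv_lhs => rw [key2 I hI]
      rw [map_prod (Ideal.absNorm : Ideal (𝓞 k) →*₀ ℕ)]
      push_cast [map_pow]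
      rfl
    rw [hfI, hNI, ← Finset.prod_div_distrib]
    rw [ENNReal.ofReal_prod_of_nonneg]
    intro P hP
    exact div_nonneg (hf_nonneg _ (aux_pow_ne_bot (hprime_of_Pf P hP).1 _))
      (pow_nonneg (le_of_lt (aux_norm_pos (hprime_of_Pf P hP).1)) _)
  rw [Finset.sum_congr rfl step1]
  -- inject into the pi finset
  set ι : Ideal (𝓞 k) → (∀ a ∈ Pf, ℕ) := fun I => fun P _ => c I P with hι
  have hinj : ∀ I ∈ T, ∀ J ∈ T, ι I = ι J → I = J := by
    intro I hI J hJ hIJ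
    rw [key2 I hI, key2 J hJ]
    refine Finset.prod_congr rfl fun P hP => ?_
    have h := congr_fun (congr_fun hIJ P) hP
    simp only [hι] at h
    rw [h]
  have hmaps : ∀ I ∈ T, ι I ∈ Pf.pi fun _ => Finset.range (n + 1) := by
    intro I hI
    rw [Finset.mem_pi]
    intro P hP
    rw [Finset.mem_range]
    exact Nat.lt_succ_of_le (key3 I hI P hP)
  have hattach : ∀ (p : ∀ a ∈ Pf, ℕ), (∏ P ∈ Pf.attach, g P.1 (p P.1 P.2)) =
      ∏ P ∈ Pf.attach, g P.1 (p P.1 P.2) := fun _ => rfl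
  calc ∑ I ∈ T, ∏ P ∈ Pf, g P (c I P)
      = ∑ I ∈ T, ∏ P ∈ Pf.attach, g P.1 (ι I P.1 P.2) := by
        refine Finset.sum_congr rfl fun I hI => ?_
        rw [← Finset.prod_attach Pf (fun P => g P (c I P))]
    _ = ∑ p ∈ T.image ι, ∏ P ∈ Pf.attach, g P.1 (p P.1 P.2) := by
        rw [Finset.sum_image hinj]
    _ ≤ ∑ p ∈ Pf.pi fun _ => Finset.range (n + 1), ∏ P ∈ Pf.attach, g P.1 (p P.1 P.2) := by
        refine Finset.sum_le_sum_of_subset ?_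
        intro p hp
        obtain ⟨I, hI, rfl⟩ := Finset.mem_image.mp hp
        exact hmaps I hI
    _ = ∏ P ∈ Pf, ∑ ν ∈ Finset.range (n + 1), g P ν := (Finset.prod_sum _ _ _).symm
    _ ≤ ∏ P ∈ Pf, ∑' ν : ℕ, g P ν := by
        refine Finset.prod_le_prod' fun P _ => ?_
        exact ENNReal.sum_le_tsum _

end Aux3

section Aux4
set_option linter.unusedSectionVars false
variable {k : Type*} [Field k] [NumberField k]

lemma aux_master (f : Ideal (𝓞 k) → ℝ)
    (hf_nonneg : ∀ I : Ideal (𝓞 k), I ≠ ⊥ → 0 ≤ f I)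
    (A B : ℝ)
    (hA_bound : ∀ y : ℝ, 0 ≤ y →
      (∑ᶠ P ∈ {P : Ideal (𝓞 k) | P ≠ ⊥ ∧ P.IsPrime ∧ (Ideal.absNorm P : ℝ) ≤ y},
        f P * Real.log (Ideal.absNorm P)) ≤ A * y)
    (hB_bound : ∀ S : Finset (Ideal (𝓞 k) × ℕ),
      (∀ q ∈ S, q.1 ≠ ⊥ ∧ q.1.IsPrime ∧ 2 ≤ q.2) →
      (∑ q ∈ S, f (q.1 ^ q.2) * Real.log ((Ideal.absNorm q.1 : ℝ) ^ q.2) /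
        (Ideal.absNorm q.1 : ℝ) ^ q.2) ≤ B)
    (y : ℝ) (hy : 0 ≤ y) (s : Finset (Ideal (𝓞 k) × ℕ))
    (hs : ∀ q ∈ s, q.1 ≠ ⊥ ∧ q.1.IsPrime ∧ 1 ≤ q.2 ∧ ((Ideal.absNorm q.1 : ℝ)) ^ q.2 ≤ y) :
    ∑ q ∈ s, f (q.1 ^ q.2) * Real.log ((Ideal.absNorm q.1 : ℝ) ^ q.2) ≤ (A + B) * y := by
  classical
  have hterm_nonneg : ∀ q ∈ s, 0 ≤ f (q.1 ^ q.2) * Real.log ((Ideal.absNorm q.1 : ℝ) ^ q.2) := by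
    intro q hq
    obtain ⟨hb, hp, h1, _⟩ := hs q hq
    have h2 : (1 : ℝ) ≤ (Ideal.absNorm q.1 : ℝ) ^ q.2 :=
      one_le_pow₀ (le_trans (by norm_num) (aux_norm_prime_two hb hp))
    exact mul_nonneg (hf_nonneg _ (aux_pow_ne_bot hb _)) (Real.log_nonneg h2)
  rw [← Finset.sum_filter_add_sum_filter_not s (fun q => q.2 = 1)]
  have hbound1 : ∑ q ∈ s.filter (fun q => q.2 = 1),
      f (q.1 ^ q.2) * Real.log ((Ideal.absNorm q.1 : ℝ) ^ q.2) ≤ A * y := by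
    have heq : ∑ q ∈ s.filter (fun q => q.2 = 1),
        f (q.1 ^ q.2) * Real.log ((Ideal.absNorm q.1 : ℝ) ^ q.2) =
        ∑ P ∈ (s.filter (fun q => q.2 = 1)).image Prod.fst,
          f P * Real.log (Ideal.absNorm P) := by
      rw [Finset.sum_image]
      · refine Finset.sum_congr rfl fun q hq => ?_
        have h1 : q.2 = 1 := (Finset.mem_filter.mp hq).2
        rw [h1, pow_one, pow_one]
      · intro q hq r hr hqr
        have h1 : q.2 = 1 := (Finset.mem_filter.mp hq).2
        have h2 : r.2 = 1 := (Finset.mem_filter.mp hr).2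
        exact Prod.ext hqr (h1.trans h2.symm)
    rw [heq]
    have hfin : {P : Ideal (𝓞 k) | P ≠ ⊥ ∧ P.IsPrime ∧ (Ideal.absNorm P : ℝ) ≤ y}.Finite := by
      apply (Ideal.finite_setOf_absNorm_le ⌊y⌋₊).subset
      rintro P ⟨hb, hp, hle⟩
      exact Nat.le_floor hle
    have hsubs : (s.filter (fun q => q.2 = 1)).image Prod.fst ⊆ hfin.toFinset := by
      intro P hP
      obtain ⟨q, hq, rfl⟩ := Finset.mem_image.mp hP
      obtain ⟨hqs, hq1⟩ := Finset.mem_filter.mp hq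
      obtain ⟨hb, hp, _, hle⟩ := hs q hqs
      rw [Set.Finite.mem_toFinset]
      refine ⟨hb, hp, ?_⟩
      rw [hq1, pow_one] at hle
      exact hle
    have hstep : ∑ P ∈ (s.filter (fun q => q.2 = 1)).image Prod.fst,
        f P * Real.log (Ideal.absNorm P) ≤
        ∑ P ∈ hfin.toFinset, f P * Real.log (Ideal.absNorm P) := by
      refine Finset.sum_le_sum_of_subset_of_nonneg hsubs ?_
      intro P hP _
      rw [Set.Finite.mem_toFinset] at hP
      obtain ⟨hb, hp, _⟩ := hP
      exact mul_nonneg (hf_nonneg P hb)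
        (Real.log_nonneg (le_trans (by norm_num) (aux_norm_prime_two hb hp)))
    refine le_trans hstep ?_
    have := hA_bound y hy
    rwa [finsum_mem_eq_finite_toFinset_sum _ hfin] at this
  have hbound2 : ∑ q ∈ s.filter (fun q => ¬ q.2 = 1),
      f (q.1 ^ q.2) * Real.log ((Ideal.absNorm q.1 : ℝ) ^ q.2) ≤ B * y := by
    set s2 := s.filter (fun q => ¬ q.2 = 1) with hs2
    have hs2mem : ∀ q ∈ s2, q.1 ≠ ⊥ ∧ q.1.IsPrime ∧ 2 ≤ q.2 := by
      intro q hq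
      obtain ⟨hqs, hq1⟩ := Finset.mem_filter.mp hq
      obtain ⟨hb, hp, h1, _⟩ := hs q hqs
      exact ⟨hb, hp, by omega⟩
    have hstep : ∀ q ∈ s2, f (q.1 ^ q.2) * Real.log ((Ideal.absNorm q.1 : ℝ) ^ q.2) ≤
        (f (q.1 ^ q.2) * Real.log ((Ideal.absNorm q.1 : ℝ) ^ q.2) /
          (Ideal.absNorm q.1 : ℝ) ^ q.2) * y := by
      intro q hq
      obtain ⟨hqs, _⟩ := Finset.mem_filter.mp hq
      obtain ⟨hb, hp, h1, hle⟩ := hs q hqs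
      have hpow_pos : (0:ℝ) < (Ideal.absNorm q.1 : ℝ) ^ q.2 := pow_pos (aux_norm_pos hb) _
      rw [div_mul_eq_mul_div, le_div_iff₀ hpow_pos]
      exact mul_le_mul_of_nonneg_left hle (hterm_nonneg q hqs)
    calc ∑ q ∈ s2, f (q.1 ^ q.2) * Real.log ((Ideal.absNorm q.1 : ℝ) ^ q.2)
        ≤ ∑ q ∈ s2, (f (q.1 ^ q.2) * Real.log ((Ideal.absNorm q.1 : ℝ) ^ q.2) /
            (Ideal.absNorm q.1 : ℝ) ^ q.2) * y := Finset.sum_le_sum hstep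
      _ = (∑ q ∈ s2, f (q.1 ^ q.2) * Real.log ((Ideal.absNorm q.1 : ℝ) ^ q.2) /
            (Ideal.absNorm q.1 : ℝ) ^ q.2) * y := by rw [Finset.sum_mul]
      _ ≤ B * y := mul_le_mul_of_nonneg_right (hB_bound s2 hs2mem) hy
  calc _ ≤ A * y + B * y := add_le_add hbound1 hbound2
    _ = (A + B) * y := (add_mul A B y).symm

end Aux4

section Aux5
set_option linter.unusedSectionVars false
variable {k : Type*} [Field k] [NumberField k]

lemma aux_count_ge {I P : Ideal (𝓞 k)} [DecidableEq (Ideal (𝓞 k))]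
    (hI : I ≠ ⊥) (hP : Prime P) {m : ℕ} (h : P ^ m ∣ I) :
    m ≤ (normalizedFactors I).count P := by
  classical
  have h1 : normalizedFactors (P ^ m) ≤ normalizedFactors I :=
    (dvd_iff_normalizedFactors_le_normalizedFactors
      (pow_ne_zero _ hP.ne_zero) (aux_ne_zero hI)).mp h
  have h2 : normalizedFactors (P ^ m) = Multiset.replicate m P := by
    rw [normalizedFactors_pow, normalizedFactors_irreducible hP.irreducible,
      normalize_eq, Multiset.nsmul_singleton]
  have := Multiset.count_le_of_le P h1
  rwa [h2, Multiset.count_replicate_self] at this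

lemma aux_sup_pow_eq_top {J P : Ideal (𝓞 k)} (hP : P ≠ ⊥) (hPp : P.IsPrime)
    (hnd : ¬ P ∣ J) (ν : ℕ) : J ⊔ P ^ ν = ⊤ := by
  have hPprime : Prime P := Ideal.prime_of_isPrime hP hPp
  have hd : (J ⊔ P) ∣ P := Ideal.dvd_iff_le.mpr le_sup_right
  obtain ⟨c, hc⟩ := hd
  have hsup : J ⊔ P = ⊤ := by
    rcases hPprime.irreducible.isUnit_or_isUnit hc with h | h
    · rwa [Ideal.isUnit_iff] at h
    · exfalso
      apply hnd
      rw [Ideal.isUnit_iff] at h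
      rw [h, ← Ideal.one_eq_top, mul_one] at hc
      exact Ideal.dvd_iff_le.mpr (hc ▸ le_sup_left)
  have : IsCoprime J (P ^ ν) := (Ideal.isCoprime_iff_sup_eq.mpr hsup).pow_right
  exact Ideal.isCoprime_iff_sup_eq.mp this

lemma aux_logsum (f : Ideal (𝓞 k) → ℝ)
    (hf_nonneg : ∀ I : Ideal (𝓞 k), I ≠ ⊥ → 0 ≤ f I)
    (hf_one : f ⊤ = 1)
    (hf_mul : ∀ I J : Ideal (𝓞 k), I ≠ ⊥ → J ≠ ⊥ → I ⊔ J = ⊤ → f (I * J) = f I * f J)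
    (A B : ℝ)
    (hA_bound : ∀ y : ℝ, 0 ≤ y →
      (∑ᶠ P ∈ {P : Ideal (𝓞 k) | P ≠ ⊥ ∧ P.IsPrime ∧ (Ideal.absNorm P : ℝ) ≤ y},
        f P * Real.log (Ideal.absNorm P)) ≤ A * y)
    (hB_bound : ∀ S : Finset (Ideal (𝓞 k) × ℕ),
      (∀ q ∈ S, q.1 ≠ ⊥ ∧ q.1.IsPrime ∧ 2 ≤ q.2) →
      (∑ q ∈ S, f (q.1 ^ q.2) * Real.log ((Ideal.absNorm q.1 : ℝ) ^ q.2) /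
        (Ideal.absNorm q.1 : ℝ) ^ q.2) ≤ B)
    (x : ℝ) (hx : 1 < x)
    (T Pf : Finset (Ideal (𝓞 k)))
    (hT : ∀ I, I ∈ T ↔ I ≠ ⊥ ∧ (Ideal.absNorm I : ℝ) ≤ x)
    (hPf : ∀ Q, Q ∈ Pf ↔ Q ≠ ⊥ ∧ Q.IsPrime ∧ (Ideal.absNorm Q : ℝ) ≤ x) :
    ∑ I ∈ T, f I * Real.log (Ideal.absNorm I) ≤
      (A + B) * x * ∑ J ∈ T, f J / (Ideal.absNorm J : ℝ) := by
  classical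
  set n := ⌊x⌋₊ with hn
  set W : Ideal (𝓞 k) → Finset (Ideal (𝓞 k) × ℕ) := fun J =>
    (Pf ×ˢ Finset.range (n + 1)).filter
      (fun q => ¬ q.1 ∣ J ∧ 1 ≤ q.2 ∧
        (Ideal.absNorm J : ℝ) * (Ideal.absNorm q.1 : ℝ) ^ q.2 ≤ x) with hW
  -- Step a : rewrite LHS as a sigma sum
  have stepa : ∑ I ∈ T, f I * Real.log (Ideal.absNorm I) =
      ∑ p ∈ T.sigma (fun I => (normalizedFactors I).toFinset),
        f p.1 * (((normalizedFactors p.1).count p.2 : ℝ) * Real.log (Ideal.absNorm p.2)) := by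
    rw [← Finset.sum_sigma' T (fun I => (normalizedFactors I).toFinset)
      (fun I P => f I * (((normalizedFactors I).count P : ℝ) * Real.log (Ideal.absNorm P)))]
    refine Finset.sum_congr rfl fun I hI => ?_
    rw [aux_log_norm I ((hT I).mp hI).1, Finset.mul_sum]
  -- Step b : the bijection
  have stepb : ∑ p ∈ T.sigma W,
        f p.1 * (f (p.2.1 ^ p.2.2) * Real.log ((Ideal.absNorm p.2.1 : ℝ) ^ p.2.2)) =
      ∑ p ∈ T.sigma (fun I => (normalizedFactors I).toFinset),
        f p.1 * (((normalizedFactors p.1).count p.2 : ℝ) * Real.log (Ideal.absNorm p.2)) := by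
    refine Finset.sum_bij (fun p _ => ⟨p.1 * p.2.1 ^ p.2.2, p.2.1⟩) ?_ ?_ ?_ ?_
    · -- maps into
      rintro ⟨J, P, ν⟩ hp
      simp only [Finset.mem_sigma, hW, Finset.mem_filter, Finset.mem_product] at hp
      obtain ⟨hJT, ⟨hPPf, -⟩, hnd, hν1, hle⟩ := hp
      obtain ⟨hJb, hJx⟩ := (hT J).mp hJT
      obtain ⟨hPb, hPp, hPx⟩ := (hPf P).mp hPPf
      have hIb : J * P ^ ν ≠ ⊥ := by
        rw [← Ideal.zero_eq_bot] at *
        exact mul_ne_zero hJb (pow_ne_zero _ hPb)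
      rw [Finset.mem_sigma]
      constructor
      · rw [hT]
        refine ⟨hIb, ?_⟩
        rw [aux_norm_mul_r, aux_norm_pow_r]
        exact hle
      · rw [Multiset.mem_toFinset, aux_mem_nf hIb]
        exact ⟨Ideal.prime_of_isPrime hPb hPp,
          dvd_mul_of_dvd_right (dvd_pow_self P (by omega)) J⟩
    · -- injective
      rintro ⟨J, P, ν⟩ hp ⟨J', P', ν'⟩ hp' heq
      simp only [Finset.mem_sigma, hW, Finset.mem_filter, Finset.mem_product] at hp hp'
      obtain ⟨hJT, ⟨hPPf, -⟩, hnd, hν1, hle⟩ := hp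
      obtain ⟨hJT', ⟨hPPf', -⟩, hnd', hν1', hle'⟩ := hp'
      obtain ⟨hPb, hPp, hPx⟩ := (hPf P).mp hPPf
      obtain ⟨hPb', hPp', hPx'⟩ := (hPf P').mp hPPf'
      obtain ⟨hJb, _⟩ := (hT J).mp hJT
      obtain ⟨hJb', _⟩ := (hT J').mp hJT'
      have heq' : (⟨J * P ^ ν, P⟩ : Σ _ : Ideal (𝓞 k), Ideal (𝓞 k)) = ⟨J' * P' ^ ν', P'⟩ := heq
      have heq1 : J * P ^ ν = J' * P' ^ ν' := congrArg Sigma.fst heq'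
      have hPP' : P = P' := congrArg (fun s : Σ _ : Ideal (𝓞 k), Ideal (𝓞 k) => s.snd) heq'
      subst hPP'
      have hνν' : ν = ν' := by
        have e1 : (normalizedFactors (J * P ^ ν)).count P = ν :=
          aux_count_mul_pow hJb hPb hPp hnd ν
        have e2 : (normalizedFactors (J' * P ^ ν')).count P = ν' :=
          aux_count_mul_pow hJb' hPb hPp hnd' ν'
        rw [← e1, heq1, e2]
      subst hνν'
      have hJJ' : J = J' := by
        have hpow : (P : Ideal (𝓞 k)) ^ ν ≠ 0 := by
          rw [Ideal.zero_eq_bot]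
          exact aux_pow_ne_bot hPb ν
        exact mul_right_cancel₀ hpow heq1
      subst hJJ'
      rfl
    · -- surjective
      rintro ⟨I, P⟩ hb
      simp only [Finset.mem_sigma, Multiset.mem_toFinset] at hb
      obtain ⟨hIT, hPmem⟩ := hb
      obtain ⟨hIb, hIx⟩ := (hT I).mp hIT
      obtain ⟨hPprime, hPdvd⟩ := (aux_mem_nf hIb).mp hPmem
      have hPb : P ≠ ⊥ := by rw [← Ideal.zero_eq_bot]; exact hPprime.ne_zero
      have hPp : P.IsPrime := Ideal.isPrime_of_prime hPprime
      set ν := (normalizedFactors I).count P with hν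
      have hν1 : 1 ≤ ν := Multiset.count_pos.mpr hPmem
      obtain ⟨J, hJ⟩ := aux_pow_count_dvd I P
      have hJb : J ≠ ⊥ := by
        intro h
        rw [h, Ideal.mul_bot] at hJ
        exact hIb hJ
      have hnd : ¬ P ∣ J := by
        intro hdvd
        obtain ⟨J', hJ'⟩ := hdvd
        have hpow : P ^ (ν + 1) ∣ I := by
          rw [hJ, hJ', pow_succ]
          exact ⟨J', by ring⟩
        have := aux_count_ge hIb hPprime hpow
        omega
      have hJdvd : J ∣ I := Dvd.intro_left _ hJ.symm
      have hJT : J ∈ T := by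
        rw [hT]
        exact ⟨hJb, le_trans (aux_dvd_norm_le hJdvd hIb) hIx⟩
      have hNeq : (Ideal.absNorm I : ℝ) =
          (Ideal.absNorm J : ℝ) * (Ideal.absNorm P : ℝ) ^ ν := by
        rw [hJ, aux_norm_mul_r, aux_norm_pow_r]
        ring
      have hPPf : P ∈ Pf := (hPf P).mpr ⟨hPb, hPp, le_trans (aux_dvd_norm_le hPdvd hIb) hIx⟩
      have hνn : ν ≤ n := by
        have h1 : ((Ideal.absNorm P : ℝ)) ^ ν ≤ (Ideal.absNorm I : ℝ) := by
          have := aux_dvd_norm_le (aux_pow_count_dvd I P) hIb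
          rwa [map_pow, Nat.cast_pow] at this
        have h2 : (2 : ℝ) ^ ν ≤ (Ideal.absNorm P : ℝ) ^ ν :=
          pow_le_pow_left₀ (by norm_num) (aux_norm_prime_two hPb hPp) _
        have h3 : (ν : ℝ) < (2 : ℝ) ^ ν := by exact_mod_cast Nat.lt_two_pow_self (n := ν)
        exact Nat.le_floor (le_of_lt (lt_of_lt_of_le h3 (h2.trans (h1.trans hIx))))
      refine ⟨⟨J, P, ν⟩, ?_, ?_⟩
      · rw [Finset.mem_sigma]
        refine ⟨hJT, ?_⟩
        rw [hW, Finset.mem_filter, Finset.mem_product]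
        refine ⟨⟨hPPf, Finset.mem_range.mpr (Nat.lt_succ_of_le hνn)⟩, hnd, hν1, ?_⟩
        rw [← hNeq]
        exact hIx
      · show (⟨J * P ^ ν, P⟩ : Σ _ : Ideal (𝓞 k), Ideal (𝓞 k)) = ⟨I, P⟩
        have hIeq : J * P ^ ν = I := by rw [hJ]; exact mul_comm J (P ^ ν)
        rw [hIeq]
    · -- terms agree
      rintro ⟨J, P, ν⟩ hp
      simp only [Finset.mem_sigma, hW, Finset.mem_filter, Finset.mem_product] at hp
      obtain ⟨hJT, ⟨hPPf, -⟩, hnd, hν1, hle⟩ := hp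
      obtain ⟨hPb, hPp, hPx⟩ := (hPf P).mp hPPf
      obtain ⟨hJb, _⟩ := (hT J).mp hJT
      show f J * (f (P ^ ν) * Real.log ((Ideal.absNorm P : ℝ) ^ ν)) =
        f (J * P ^ ν) * (((normalizedFactors (J * P ^ ν)).count P : ℝ) *
          Real.log (Ideal.absNorm P))
      rw [aux_count_mul_pow hJb hPb hPp hnd ν,
        hf_mul J (P ^ ν) hJb (aux_pow_ne_bot hPb ν) (aux_sup_pow_eq_top hPb hPp hnd ν),
        Real.log_pow]
      ring
  rw [stepa, ← stepb,
    ← Finset.sum_sigma' T W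
      (fun J q => f J * (f (q.1 ^ q.2) * Real.log ((Ideal.absNorm q.1 : ℝ) ^ q.2)))]
  -- Step c : bound the inner sums
  have stepc : ∀ J ∈ T, ∑ q ∈ W J,
      f J * (f (q.1 ^ q.2) * Real.log ((Ideal.absNorm q.1 : ℝ) ^ q.2)) ≤
      (A + B) * x * (f J / (Ideal.absNorm J : ℝ)) := by
    intro J hJT
    obtain ⟨hJb, hJx⟩ := (hT J).mp hJT
    have hNJ : (0 : ℝ) < (Ideal.absNorm J : ℝ) := aux_norm_pos hJb
    have hy : (0 : ℝ) ≤ x / (Ideal.absNorm J : ℝ) :=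
      div_nonneg (le_of_lt (lt_trans zero_lt_one hx)) (le_of_lt hNJ)
    have hws : ∀ q ∈ W J, q.1 ≠ ⊥ ∧ q.1.IsPrime ∧ 1 ≤ q.2 ∧
        ((Ideal.absNorm q.1 : ℝ)) ^ q.2 ≤ x / (Ideal.absNorm J : ℝ) := by
      rintro ⟨P, ν⟩ hq
      simp only [hW, Finset.mem_filter, Finset.mem_product] at hq
      obtain ⟨⟨hPPf, -⟩, hnd, hν1, hle⟩ := hq
      obtain ⟨hPb, hPp, _⟩ := (hPf P).mp hPPf
      exact ⟨hPb, hPp, hν1, (le_div_iff₀' hNJ).mpr hle⟩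
    have hmaster := aux_master f hf_nonneg A B hA_bound hB_bound
      (x / (Ideal.absNorm J : ℝ)) hy (W J) hws
    calc ∑ q ∈ W J, f J * (f (q.1 ^ q.2) * Real.log ((Ideal.absNorm q.1 : ℝ) ^ q.2))
        = f J * ∑ q ∈ W J, f (q.1 ^ q.2) * Real.log ((Ideal.absNorm q.1 : ℝ) ^ q.2) := by
          rw [Finset.mul_sum]
      _ ≤ f J * ((A + B) * (x / (Ideal.absNorm J : ℝ))) := by
          exact mul_le_mul_of_nonneg_left hmaster (hf_nonneg J hJb)
      _ = (A + B) * x * (f J / (Ideal.absNorm J : ℝ)) := by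
          field_simp
  calc ∑ J ∈ T, ∑ q ∈ W J,
        f J * (f (q.1 ^ q.2) * Real.log ((Ideal.absNorm q.1 : ℝ) ^ q.2))
      ≤ ∑ J ∈ T, (A + B) * x * (f J / (Ideal.absNorm J : ℝ)) :=
        Finset.sum_le_sum stepc
    _ = (A + B) * x * ∑ J ∈ T, f J / (Ideal.absNorm J : ℝ) := by rw [← Finset.mul_sum]

end Aux5

/-- **Mean value theorem for multiplicative functions on ideals**: Euler-product form.
The Euler factors are sums in the extended nonnegative reals. -/
theorem stmt_1 (k : Type*) [Field k] [NumberField k]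
    (f : Ideal (𝓞 k) → ℝ)
    (hf_nonneg : ∀ I : Ideal (𝓞 k), I ≠ ⊥ → 0 ≤ f I)
    (hf_one : f ⊤ = 1)
    (hf_mul : ∀ I J : Ideal (𝓞 k), I ≠ ⊥ → J ≠ ⊥ → I ⊔ J = ⊤ → f (I * J) = f I * f J)
    (A B : ℝ) (hA : 0 ≤ A) (hB : 0 ≤ B)
    (hA_bound : ∀ y : ℝ, 0 ≤ y →
      (∑ᶠ P ∈ {P : Ideal (𝓞 k) | P ≠ ⊥ ∧ P.IsPrime ∧ (Ideal.absNorm P : ℝ) ≤ y},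
        f P * Real.log (Ideal.absNorm P)) ≤ A * y)
    (hB_bound : ∀ S : Finset (Ideal (𝓞 k) × ℕ),
      (∀ q ∈ S, q.1 ≠ ⊥ ∧ q.1.IsPrime ∧ 2 ≤ q.2) →
      (∑ q ∈ S, f (q.1 ^ q.2) * Real.log ((Ideal.absNorm q.1 : ℝ) ^ q.2) /
        (Ideal.absNorm q.1 : ℝ) ^ q.2) ≤ B) :
    ∀ x : ℝ, 1 < x →
      ENNReal.ofReal (∑ᶠ I ∈ {I : Ideal (𝓞 k) | I ≠ ⊥ ∧ (Ideal.absNorm I : ℝ) ≤ x}, f I) ≤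
        ENNReal.ofReal ((A + B + 1) * (x / Real.log x)) *
          ∏ᶠ P ∈ {P : Ideal (𝓞 k) | P ≠ ⊥ ∧ P.IsPrime ∧ (Ideal.absNorm P : ℝ) ≤ x},
            ∑' ν : ℕ, ENNReal.ofReal (f (P ^ ν) / (Ideal.absNorm P : ℝ) ^ ν) := by
  intro x hx
  classical
  have hx0 : (0:ℝ) < x := lt_trans zero_lt_one hx
  have hlog : 0 < Real.log x := Real.log_pos hx
  have hTfin : {I : Ideal (𝓞 k) | I ≠ ⊥ ∧ (Ideal.absNorm I : ℝ) ≤ x}.Finite := by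
    apply (Ideal.finite_setOf_absNorm_le ⌊x⌋₊).subset
    rintro I ⟨-, h⟩
    exact Nat.le_floor h
  have hPfin : {P : Ideal (𝓞 k) | P ≠ ⊥ ∧ P.IsPrime ∧ (Ideal.absNorm P : ℝ) ≤ x}.Finite := by
    apply (Ideal.finite_setOf_absNorm_le ⌊x⌋₊).subset
    rintro P ⟨-, -, h⟩
    exact Nat.le_floor h
  rw [finsum_mem_eq_finite_toFinset_sum _ hTfin,
    finprod_mem_eq_finite_toFinset_prod _ hPfin]
  set T := hTfin.toFinset with hTdef
  set Pf := hPfin.toFinset with hPfdef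
  have hT : ∀ I, I ∈ T ↔ I ≠ ⊥ ∧ (Ideal.absNorm I : ℝ) ≤ x := by
    intro I
    rw [hTdef, Set.Finite.mem_toFinset, Set.mem_setOf_eq]
  have hPf : ∀ Q, Q ∈ Pf ↔ Q ≠ ⊥ ∧ Q.IsPrime ∧ (Ideal.absNorm Q : ℝ) ≤ x := by
    intro Q
    rw [hPfdef, Set.Finite.mem_toFinset, Set.mem_setOf_eq]
  have hfT : ∀ I ∈ T, 0 ≤ f I := fun I hI => hf_nonneg I ((hT I).mp hI).1
  have hS_nonneg : 0 ≤ ∑ I ∈ T, f I := Finset.sum_nonneg hfT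
  have hQr_nonneg : 0 ≤ ∑ J ∈ T, f J / (Ideal.absNorm J : ℝ) := by
    refine Finset.sum_nonneg fun J hJ => ?_
    exact div_nonneg (hfT J hJ) (le_of_lt (aux_norm_pos ((hT J).mp hJ).1))
  -- the real mean-value inequality
  have hsecond : ∑ I ∈ T, f I * Real.log (x / (Ideal.absNorm I : ℝ)) ≤
      x * ∑ J ∈ T, f J / (Ideal.absNorm J : ℝ) := by
    have h1 : ∀ I ∈ T, f I * Real.log (x / (Ideal.absNorm I : ℝ)) ≤
        x * (f I / (Ideal.absNorm I : ℝ)) := by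
      intro I hI
      obtain ⟨hIb, hIx⟩ := (hT I).mp hI
      have hNI : (0:ℝ) < (Ideal.absNorm I : ℝ) := aux_norm_pos hIb
      have ht : (0:ℝ) < x / (Ideal.absNorm I : ℝ) := div_pos hx0 hNI
      have hlb : Real.log (x / (Ideal.absNorm I : ℝ)) ≤ x / (Ideal.absNorm I : ℝ) :=
        (Real.log_le_sub_one_of_pos ht).trans (by linarith)
      calc f I * Real.log (x / (Ideal.absNorm I : ℝ)) ≤ f I * (x / (Ideal.absNorm I : ℝ)) :=
            mul_le_mul_of_nonneg_left hlb (hfT I hI)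
        _ = x * (f I / (Ideal.absNorm I : ℝ)) := by ring
    calc ∑ I ∈ T, f I * Real.log (x / (Ideal.absNorm I : ℝ))
        ≤ ∑ I ∈ T, x * (f I / (Ideal.absNorm I : ℝ)) := Finset.sum_le_sum h1
      _ = x * ∑ J ∈ T, f J / (Ideal.absNorm J : ℝ) := by rw [Finset.mul_sum]
  have key : (∑ I ∈ T, f I) * Real.log x ≤
      (A + B + 1) * x * ∑ J ∈ T, f J / (Ideal.absNorm J : ℝ) := by
    have hsplit : ∀ I ∈ T, f I * Real.log x =
        f I * Real.log (Ideal.absNorm I) + f I * Real.log (x / (Ideal.absNorm I : ℝ)) := by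
      intro I hI
      obtain ⟨hIb, hIx⟩ := (hT I).mp hI
      have hNI : (0:ℝ) < (Ideal.absNorm I : ℝ) := aux_norm_pos hIb
      rw [← mul_add]
      congr 1
      rw [Real.log_div (ne_of_gt hx0) (ne_of_gt hNI)]
      ring
    calc (∑ I ∈ T, f I) * Real.log x = ∑ I ∈ T, f I * Real.log x := Finset.sum_mul _ _ _
      _ = ∑ I ∈ T, (f I * Real.log (Ideal.absNorm I) +
            f I * Real.log (x / (Ideal.absNorm I : ℝ))) := Finset.sum_congr rfl hsplit
      _ = (∑ I ∈ T, f I * Real.log (Ideal.absNorm I)) +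
            ∑ I ∈ T, f I * Real.log (x / (Ideal.absNorm I : ℝ)) := Finset.sum_add_distrib
      _ ≤ (A + B) * x * (∑ J ∈ T, f J / (Ideal.absNorm J : ℝ)) +
            x * ∑ J ∈ T, f J / (Ideal.absNorm J : ℝ) :=
          add_le_add (aux_logsum f hf_nonneg hf_one hf_mul A B hA_bound hB_bound x hx
            T Pf hT hPf) hsecond
      _ = (A + B + 1) * x * ∑ J ∈ T, f J / (Ideal.absNorm J : ℝ) := by ring
  have hQ := aux_euler f hf_nonneg hf_one hf_mul x hx T Pf hT hPf
  have hABx : (0:ℝ) ≤ (A + B + 1) * x := by positivity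
  have hfinal : ENNReal.ofReal (∑ I ∈ T, f I) * ENNReal.ofReal (Real.log x) ≤
      (ENNReal.ofReal ((A + B + 1) * (x / Real.log x)) *
        ∏ P ∈ Pf, ∑' ν : ℕ, ENNReal.ofReal (f (P ^ ν) / (Ideal.absNorm P : ℝ) ^ ν)) *
        ENNReal.ofReal (Real.log x) := by
    have e1 : ENNReal.ofReal ((A + B + 1) * (x / Real.log x)) * ENNReal.ofReal (Real.log x) =
        ENNReal.ofReal ((A + B + 1) * x) := by
      rw [← ENNReal.ofReal_mul (by positivity)]
      congr 1
      field_simp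
    calc ENNReal.ofReal (∑ I ∈ T, f I) * ENNReal.ofReal (Real.log x)
        = ENNReal.ofReal ((∑ I ∈ T, f I) * Real.log x) :=
          (ENNReal.ofReal_mul hS_nonneg).symm
      _ ≤ ENNReal.ofReal ((A + B + 1) * x * ∑ J ∈ T, f J / (Ideal.absNorm J : ℝ)) :=
          ENNReal.ofReal_le_ofReal key
      _ = ENNReal.ofReal ((A + B + 1) * x) *
            ENNReal.ofReal (∑ J ∈ T, f J / (Ideal.absNorm J : ℝ)) :=
          ENNReal.ofReal_mul hABx
      _ ≤ ENNReal.ofReal ((A + B + 1) * x) *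
            ∏ P ∈ Pf, ∑' ν : ℕ, ENNReal.ofReal (f (P ^ ν) / (Ideal.absNorm P : ℝ) ^ ν) :=
          by gcongr
      _ = (ENNReal.ofReal ((A + B + 1) * (x / Real.log x)) *
            ∏ P ∈ Pf, ∑' ν : ℕ, ENNReal.ofReal (f (P ^ ν) / (Ideal.absNorm P : ℝ) ^ ν)) *
            ENNReal.ofReal (Real.log x) := by
          rw [mul_right_comm, e1]
  have hc0 : ENNReal.ofReal (Real.log x) ≠ 0 := (ENNReal.ofReal_pos.mpr hlog).ne'
  have hctop : ENNReal.ofReal (Real.log x) ≠ ⊤ := ENNReal.ofReal_ne_top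
  exact (ENNReal.mul_le_mul_iff_left hc0 hctop).mp hfinal
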